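/- Let K ≥ 1 and define the softmax function σ : ℝ^K → ℝ^K by σ(ξ)_l = exp(ξ_l) / Σ_{m=1}^{K} exp(ξ_m). There exists a constant c > 0 depending only on K such that for every random vector ξ in ℝ^K on a probability space with ‖ξ‖² integrable, and for every l ∈ [K]: |E[σ_l(ξ)] − σ_l(E[ξ])| ≤ c · Σ_{m=1}^{K} Var(ξ_m). -/

import Mathlib

open MeasureTheory

/-- The softmax function `σ : ℝ^K → ℝ^K`, `σ(ξ)_l = exp(ξ_l) / ∑ₘ exp(ξ_m)`. -/
noncomputable def softmax {K : ℕ} (ξ : Fin K → ℝ) (l : Fin K) : ℝ :=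
  Real.exp (ξ l) / ∑ m, Real.exp (ξ m)

namespace SelMixAux
open Set
variable {K : ℕ}

noncomputable def Nf (u v : Fin K → ℝ) (m : Fin K) (t : ℝ) : ℝ := Real.exp (u m + t * v m)
noncomputable def Sf (u v : Fin K → ℝ) (t : ℝ) : ℝ := ∑ m, Nf u v m t
noncomputable def Df (u v : Fin K → ℝ) (t : ℝ) : ℝ := ∑ m, v m * Nf u v m t
noncomputable def Qf (u v : Fin K → ℝ) (t : ℝ) : ℝ := ∑ m, v m ^ 2 * Nf u v m t
noncomputable def Pf (u v : Fin K → ℝ) (l : Fin K) (t : ℝ) : ℝ := Nf u v l t / Sf u v t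
noncomputable def Pf' (u v : Fin K → ℝ) (l : Fin K) (t : ℝ) : ℝ :=
  Nf u v l t * (v l * Sf u v t - Df u v t) / (Sf u v t) ^ 2
noncomputable def Pf'' (u v : Fin K → ℝ) (l : Fin K) (t : ℝ) : ℝ :=
  ((v l * Nf u v l t * (v l * Sf u v t - Df u v t)
      + Nf u v l t * (v l * Df u v t - Qf u v t)) * (Sf u v t) ^ 2
    - Nf u v l t * (v l * Sf u v t - Df u v t) * (2 * Sf u v t * Df u v t)) / ((Sf u v t) ^ 2) ^ 2

lemma Nf_pos (u v : Fin K → ℝ) (m : Fin K) (t : ℝ) : 0 < Nf u v m t := Real.exp_pos _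

lemma Sf_pos (hK : 0 < K) (u v : Fin K → ℝ) (t : ℝ) : 0 < Sf u v t := by
  have : Nonempty (Fin K) := ⟨⟨0, hK⟩⟩
  exact Finset.sum_pos (fun m _ => Nf_pos u v m t) Finset.univ_nonempty

lemma Nf_le_Sf (u v : Fin K → ℝ) (m : Fin K) (t : ℝ) : Nf u v m t ≤ Sf u v t :=
  Finset.single_le_sum (fun i _ => (Nf_pos u v i t).le) (Finset.mem_univ m)

lemma hasDerivAt_Nf (u v : Fin K → ℝ) (m : Fin K) (t : ℝ) :
    HasDerivAt (Nf u v m) (v m * Nf u v m t) t := by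
  have h : HasDerivAt (fun t : ℝ => u m + t * v m) (v m) t := by
    simpa using ((hasDerivAt_id t).mul_const (v m)).const_add (u m)
  show HasDerivAt (fun t => Real.exp (u m + t * v m)) (v m * Nf u v m t) t
  simpa [Nf, mul_comm] using h.exp

lemma hasDerivAt_Sf (u v : Fin K → ℝ) (t : ℝ) :
    HasDerivAt (Sf u v) (Df u v t) t :=
  HasDerivAt.fun_sum fun m _ => hasDerivAt_Nf u v m t

lemma hasDerivAt_Df (u v : Fin K → ℝ) (t : ℝ) :
    HasDerivAt (Df u v) (Qf u v t) t := by
  have h := HasDerivAt.fun_sum (fun m (_ : m ∈ Finset.univ) => (hasDerivAt_Nf u v m t).const_mul (v m))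
  refine h.congr_deriv ?_
  unfold Qf; exact Finset.sum_congr rfl fun m _ => by ring

lemma hasDerivAt_Pf (hK : 0 < K) (u v : Fin K → ℝ) (l : Fin K) (t : ℝ) :
    HasDerivAt (Pf u v l) (Pf' u v l t) t := by
  have h := (hasDerivAt_Nf u v l t).div (hasDerivAt_Sf u v t) (Sf_pos hK u v t).ne'
  refine h.congr_deriv ?_
  unfold Pf'; ring

lemma hasDerivAt_Pf' (hK : 0 < K) (u v : Fin K → ℝ) (l : Fin K) (t : ℝ) :
    HasDerivAt (Pf' u v l) (Pf'' u v l t) t := by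
  have hnum : HasDerivAt (fun t => Nf u v l t * (v l * Sf u v t - Df u v t))
      ((v l * Nf u v l t) * (v l * Sf u v t - Df u v t)
        + Nf u v l t * (v l * Df u v t - Qf u v t)) t :=
    (hasDerivAt_Nf u v l t).mul
      (((hasDerivAt_Sf u v t).const_mul (v l)).sub (hasDerivAt_Df u v t))
  have hden : HasDerivAt (fun t => (Sf u v t) ^ 2) ((2 : ℕ) * (Sf u v t) ^ 1 * Df u v t) t :=
    (hasDerivAt_Sf u v t).pow 2
  have h := hnum.div hden (pow_ne_zero 2 (Sf_pos hK u v t).ne')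
  refine h.congr_deriv ?_
  unfold Pf''
  push_cast
  ring

lemma abs_Df_le {u v : Fin K → ℝ} {V : ℝ} (hV : ∀ j, |v j| ≤ V) (t : ℝ) :
    |Df u v t| ≤ V * Sf u v t := by
  calc |Df u v t| ≤ ∑ j, |v j * Nf u v j t| := Finset.abs_sum_le_sum_abs _ _
    _ ≤ ∑ j, V * Nf u v j t := by
        refine Finset.sum_le_sum fun j _ => ?_
        rw [abs_mul, abs_of_pos (Nf_pos u v j t)]
        exact mul_le_mul_of_nonneg_right (hV j) (Nf_pos u v j t).le
    _ = V * Sf u v t := by rw [Sf, Finset.mul_sum]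

lemma abs_Qf_le {u v : Fin K → ℝ} {V : ℝ} (hV : ∀ j, |v j| ≤ V) (t : ℝ) :
    |Qf u v t| ≤ V ^ 2 * Sf u v t := by
  calc |Qf u v t| ≤ ∑ j, |v j ^ 2 * Nf u v j t| := Finset.abs_sum_le_sum_abs _ _
    _ ≤ ∑ j, V ^ 2 * Nf u v j t := by
        refine Finset.sum_le_sum fun j _ => ?_
        rw [abs_mul, abs_of_pos (Nf_pos u v j t), abs_of_nonneg (sq_nonneg _)]
        refine mul_le_mul_of_nonneg_right ?_ (Nf_pos u v j t).le
        calc v j ^ 2 = |v j| ^ 2 := (sq_abs _).symm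
          _ ≤ V ^ 2 := pow_le_pow_left₀ (abs_nonneg _) (hV j) 2
    _ = V ^ 2 * Sf u v t := by rw [Sf, Finset.mul_sum]

lemma abs_Pf''_le (hK : 0 < K) {u v : Fin K → ℝ} {V : ℝ} (hV : ∀ j, |v j| ≤ V)
    (l : Fin K) (t : ℝ) : |Pf'' u v l t| ≤ 8 * V ^ 2 := by
  have hV0 : 0 ≤ V := (abs_nonneg _).trans (hV l)
  set S := Sf u v t with hSdef
  set N := Nf u v l t with hNdef
  set D := Df u v t with hDdef
  set Q := Qf u v t with hQdef
  have hS : 0 < S := Sf_pos hK u v t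
  have hN0 : 0 < N := Nf_pos u v l t
  have hNS : N ≤ S := Nf_le_Sf u v l t
  have hD : |D| ≤ V * S := abs_Df_le hV t
  have hQ : |Q| ≤ V ^ 2 * S := abs_Qf_le hV t
  have hvl : |v l| ≤ V := hV l
  have hA : |v l * S - D| ≤ 2 * (V * S) := by
    calc |v l * S - D| ≤ |v l * S| + |D| := abs_sub _ _
      _ ≤ V * S + V * S := by
          rw [abs_mul, abs_of_pos hS]
          exact add_le_add (mul_le_mul_of_nonneg_right hvl hS.le) hD
      _ = 2 * (V * S) := by ring
  have hB : |v l * D - Q| ≤ 2 * (V ^ 2 * S) := by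
    calc |v l * D - Q| ≤ |v l * D| + |Q| := abs_sub _ _
      _ ≤ V * (V * S) + V ^ 2 * S := by
          rw [abs_mul]
          exact add_le_add (mul_le_mul hvl hD (abs_nonneg _) hV0) hQ
      _ = 2 * (V ^ 2 * S) := by ring
  have h1 : |v l * N * (v l * S - D)| ≤ 2 * (V ^ 2 * S ^ 2) := by
    rw [abs_mul, abs_mul, abs_of_pos hN0]
    calc |v l| * N * |v l * S - D| ≤ V * S * (2 * (V * S)) :=
          mul_le_mul (mul_le_mul hvl hNS hN0.le hV0) hA (abs_nonneg _) (by positivity)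
      _ = 2 * (V ^ 2 * S ^ 2) := by ring
  have h2 : |N * (v l * D - Q)| ≤ 2 * (V ^ 2 * S ^ 2) := by
    rw [abs_mul, abs_of_pos hN0]
    calc N * |v l * D - Q| ≤ S * (2 * (V ^ 2 * S)) :=
          mul_le_mul hNS hB (abs_nonneg _) hS.le
      _ = 2 * (V ^ 2 * S ^ 2) := by ring
  have h3 : |N * (v l * S - D) * (2 * S * D)| ≤ 4 * (V ^ 2 * S ^ 4) := by
    rw [abs_mul, abs_mul, abs_of_pos hN0]
    calc N * |v l * S - D| * |2 * S * D| ≤ S * (2 * (V * S)) * (2 * S * (V * S)) := by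
          refine mul_le_mul (mul_le_mul hNS hA (abs_nonneg _) hS.le) ?_ (abs_nonneg _)
            (by positivity)
          calc |2 * S * D| = 2 * S * |D| := by
                rw [abs_mul, abs_of_pos (by positivity : (0:ℝ) < 2 * S)]
            _ ≤ 2 * S * (V * S) := mul_le_mul_of_nonneg_left hD (by positivity)
      _ = 4 * (V ^ 2 * S ^ 4) := by ring
  rw [Pf'', ← hSdef, ← hNdef, ← hDdef, ← hQdef, abs_div,
    abs_of_pos (by positivity : (0:ℝ) < (S ^ 2) ^ 2), div_le_iff₀ (by positivity)]
  calc |(v l * N * (v l * S - D) + N * (v l * D - Q)) * S ^ 2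
        - N * (v l * S - D) * (2 * S * D)|
      ≤ |(v l * N * (v l * S - D) + N * (v l * D - Q))| * S ^ 2
        + |N * (v l * S - D) * (2 * S * D)| := by
        refine (abs_sub _ _).trans (add_le_add_left ?_ _)
        rw [abs_mul, abs_of_nonneg (sq_nonneg S)]
    _ ≤ (|v l * N * (v l * S - D)| + |N * (v l * D - Q)|) * S ^ 2
        + 4 * (V ^ 2 * S ^ 4) :=
        add_le_add (mul_le_mul_of_nonneg_right (abs_add_le _ _) (sq_nonneg S)) h3
    _ ≤ (2 * (V ^ 2 * S ^ 2) + 2 * (V ^ 2 * S ^ 2)) * S ^ 2 + 4 * (V ^ 2 * S ^ 4) :=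
        add_le_add_left (mul_le_mul_of_nonneg_right (add_le_add h1 h2) (sq_nonneg S)) _
    _ = 8 * V ^ 2 * (S ^ 2) ^ 2 := by ring

/-- the gradient coefficients of `softmax · l` at `u` -/
noncomputable def gradCoef (u : Fin K → ℝ) (l j : Fin K) : ℝ :=
  Real.exp (u l) * ((if j = l then (∑ m, Real.exp (u m)) else 0) - Real.exp (u j))
    / (∑ m, Real.exp (u m)) ^ 2

lemma Pf'_zero (u v : Fin K → ℝ) (l : Fin K) :
    Pf' u v l 0 = ∑ j, gradCoef u l j * v j := by
  have h1 : ∀ m, Nf u v m 0 = Real.exp (u m) := by intro m; simp [Nf]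
  have hSA : Sf u v 0 = ∑ m, Real.exp (u m) := by
    unfold Sf; exact Finset.sum_congr rfl fun m _ => h1 m
  have hD : Df u v 0 = ∑ j, v j * Real.exp (u j) := by
    unfold Df; exact Finset.sum_congr rfl fun m _ => by rw [h1]
  rw [Pf', h1, hSA, hD]
  simp only [gradCoef, div_mul_eq_mul_div, ← Finset.sum_div]
  congr 1
  have hsplit : ∀ j : Fin K,
      Real.exp (u l) * ((if j = l then (∑ m, Real.exp (u m)) else 0) - Real.exp (u j)) * v j
      = (if j = l then Real.exp (u l) * (∑ m, Real.exp (u m)) * v j else 0)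
        - Real.exp (u l) * (Real.exp (u j) * v j) := by
    intro j; split <;> ring
  rw [Finset.sum_congr rfl fun j _ => hsplit j, Finset.sum_sub_distrib,
    Finset.sum_ite_eq' Finset.univ l, ← Finset.mul_sum]
  simp only [Finset.mem_univ, if_true]
  have hcomm : ∑ j, Real.exp (u j) * v j = ∑ j, v j * Real.exp (u j) :=
    Finset.sum_congr rfl fun j _ => mul_comm _ _
  rw [hcomm]
  ring

lemma key (hK : 0 < K) (l : Fin K) (u x : Fin K → ℝ) :
    |softmax x l - softmax u l - ∑ j, gradCoef u l j * (x j - u j)| ≤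
      8 * ∑ m, (x m - u m) ^ 2 := by
  set v : Fin K → ℝ := fun m => x m - u m with hv
  set V : ℝ := Real.sqrt (∑ m, v m ^ 2) with hVdef
  have hsum0 : (0:ℝ) ≤ ∑ m, v m ^ 2 := Finset.sum_nonneg fun m _ => sq_nonneg _
  have hVsq : V ^ 2 = ∑ m, v m ^ 2 := Real.sq_sqrt hsum0
  have hVj : ∀ j, |v j| ≤ V := by
    intro j
    rw [← Real.sqrt_sq_eq_abs]
    exact Real.sqrt_le_sqrt (Finset.single_le_sum (fun m _ => sq_nonneg (v m)) (Finset.mem_univ j))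
  have step1 : ∀ t ∈ Icc (0:ℝ) 1, ‖Pf' u v l t - Pf' u v l 0‖ ≤ 8 * V ^ 2 * t := by
    intro t ht
    have := norm_image_sub_le_of_norm_deriv_le_segment'
      (f := Pf' u v l) (f' := Pf'' u v l) (a := 0) (b := 1) (C := 8 * V ^ 2)
      (fun s _ => (hasDerivAt_Pf' hK u v l s).hasDerivWithinAt)
      (fun s _ => by simpa [Real.norm_eq_abs] using abs_Pf''_le hK hVj l s) t ht
    simpa using this
  have step2 : ‖(Pf u v l 1 - 1 * Pf' u v l 0) - (Pf u v l 0 - 0 * Pf' u v l 0)‖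
      ≤ 8 * V ^ 2 := by
    refine norm_image_sub_le_of_norm_deriv_le_segment_01'
      (f := fun t => Pf u v l t - t * Pf' u v l 0)
      (f' := fun t => Pf' u v l t - Pf' u v l 0) ?_ ?_
    · intro t _
      exact ((hasDerivAt_Pf hK u v l t).sub
        (hasDerivAt_mul_const (Pf' u v l 0))).hasDerivWithinAt
    · intro t ht
      calc ‖Pf' u v l t - Pf' u v l 0‖ ≤ 8 * V ^ 2 * t := step1 t ⟨ht.1, ht.2.le⟩
        _ ≤ 8 * V ^ 2 * 1 := mul_le_mul_of_nonneg_left ht.2.le (by positivity)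
        _ = 8 * V ^ 2 := mul_one _
  have hPf1 : Pf u v l 1 = softmax x l := by
    unfold Pf Nf Sf softmax
    congr 1
    · congr 1; simp [hv]
    · refine Finset.sum_congr rfl fun m _ => ?_; unfold Nf; congr 1; simp [hv]
  have hPf0 : Pf u v l 0 = softmax u l := by
    unfold Pf Nf Sf softmax
    congr 1
    · simp
    · refine Finset.sum_congr rfl fun m _ => ?_; unfold Nf; simp
  have hlin : Pf' u v l 0 = ∑ j, gradCoef u l j * (x j - u j) := Pf'_zero u v l
  rw [← hPf1, ← hPf0, ← hlin, ← hVsq]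
  simpa [Real.norm_eq_abs, sub_sub, add_comm] using step2

end SelMixAux

/-- Lemma C.4 of the SelMix paper: there is a constant `c > 0` depending only on `K` such
that for every random vector `ξ` in `ℝ^K` with `‖ξ‖²` integrable and every coordinate `l`,
`|E[σ_l(ξ)] - σ_l(E[ξ])| ≤ c ∑ₘ Var(ξ_m)`. -/
theorem softmax_jensen_gap (K : ℕ) (hK : 1 ≤ K) :
    ∃ c : ℝ, 0 < c ∧
      ∀ (Ω : Type) [MeasurableSpace Ω] (μ : Measure Ω) [IsProbabilityMeasure μ],
        ∀ ξ : Ω → (Fin K → ℝ), AEStronglyMeasurable ξ μ →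
          Integrable (fun ω => ‖ξ ω‖ ^ 2) μ →
          ∀ l : Fin K,
            |(∫ ω, softmax (ξ ω) l ∂μ) - softmax (∫ ω, ξ ω ∂μ) l| ≤
              c * ∑ m, ∫ ω, (ξ ω m - ∫ ω', ξ ω' m ∂μ) ^ 2 ∂μ := by
  have hKpos : 0 < K := hK
  refine ⟨8, by norm_num, ?_⟩
  intro Ω _ μ _ ξ hmeas hint l
  set a : Fin K → ℝ := ∫ ω, ξ ω ∂μ with ha
  have hξi : Integrable ξ μ := by
    refine ((integrable_const (1:ℝ)).add hint).mono' hmeas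
      (Filter.Eventually.of_forall fun ω => ?_)
    simp only [Pi.add_apply]
    nlinarith [norm_nonneg (ξ ω)]
  have ham : ∀ m, (∫ ω, ξ ω m ∂μ) = a m := fun m => by
    have h := (ContinuousLinearMap.proj (R := ℝ) (φ := fun _ : Fin K => ℝ) m).integral_comp_comm hξi
    simpa using h
  have hm_i : ∀ m, Integrable (fun ω => ξ ω m) μ := fun m =>
    (ContinuousLinearMap.proj (R := ℝ) (φ := fun _ : Fin K => ℝ) m).integrable_comp hξi
  have hm_sq : ∀ m, Integrable (fun ω => (ξ ω m) ^ 2) μ := fun m => by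
    refine hint.mono' ((continuous_pow 2).comp_aestronglyMeasurable
      (hm_i m).aestronglyMeasurable) (Filter.Eventually.of_forall fun ω => ?_)
    have h := norm_le_pi_norm (ξ ω) m
    simp only [Real.norm_eq_abs] at h ⊢
    rw [abs_of_nonneg (sq_nonneg _)]
    calc ξ ω m ^ 2 = |ξ ω m| ^ 2 := (sq_abs _).symm
      _ ≤ ‖ξ ω‖ ^ 2 := pow_le_pow_left₀ (abs_nonneg _) h 2
  have hvar_i : ∀ m, Integrable (fun ω => (ξ ω m - a m) ^ 2) μ := fun m => by
    have heq : (fun ω => (ξ ω m - a m) ^ 2)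
        = fun ω => ((ξ ω m) ^ 2 - (2 * a m) * ξ ω m) + (a m) ^ 2 := by
      funext ω; ring
    rw [heq]
    exact ((hm_sq m).sub ((hm_i m).const_mul _)).add (integrable_const _)
  have hS_pos : ∀ p : Fin K → ℝ, 0 < ∑ m, Real.exp (p m) := fun p => by
    have : Nonempty (Fin K) := ⟨⟨0, hKpos⟩⟩
    exact Finset.sum_pos (fun m _ => Real.exp_pos _) Finset.univ_nonempty
  have hcont : Continuous (fun p : Fin K → ℝ => softmax p l) := by
    apply Continuous.div
    · exact Real.continuous_exp.comp (continuous_apply l)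
    · exact continuous_finset_sum _ fun m _ => Real.continuous_exp.comp (continuous_apply m)
    · exact fun p => (hS_pos p).ne'
  have hsm01 : ∀ p : Fin K → ℝ, 0 ≤ softmax p l ∧ softmax p l ≤ 1 := fun p => by
    constructor
    · exact div_nonneg (Real.exp_pos _).le (hS_pos p).le
    · rw [softmax, div_le_one (hS_pos p)]
      exact Finset.single_le_sum (fun m _ => (Real.exp_pos (p m)).le) (Finset.mem_univ l)
  have hσ_i : Integrable (fun ω => softmax (ξ ω) l) μ := by
    refine (integrable_const (1:ℝ)).mono' (hcont.comp_aestronglyMeasurable hmeas)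
      (Filter.Eventually.of_forall fun ω => ?_)
    rw [Real.norm_eq_abs, abs_of_nonneg (hsm01 _).1]
    exact (hsm01 (ξ ω)).2
  have hlin_i : ∀ j, Integrable (fun ω => SelMixAux.gradCoef a l j * (ξ ω j - a j)) μ :=
    fun j => ((hm_i j).sub (integrable_const _)).const_mul _
  have hlin0 : (∫ ω, ∑ j, SelMixAux.gradCoef a l j * (ξ ω j - a j) ∂μ) = 0 := by
    rw [integral_finset_sum _ fun j _ => hlin_i j]
    refine Finset.sum_eq_zero fun j _ => ?_
    have hi : Integrable (fun ω => ξ ω j - a j) μ := (hm_i j).sub (integrable_const _)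
    rw [integral_const_mul, integral_sub (hm_i j) (integrable_const _), integral_const]
    simp [ham j]
  have hconst : (∫ _ω, softmax a l ∂μ) = softmax a l := by simp
  have hdiff_i : Integrable (fun ω => softmax (ξ ω) l - softmax a l
      - ∑ j, SelMixAux.gradCoef a l j * (ξ ω j - a j)) μ :=
    (hσ_i.sub (integrable_const _)).sub (integrable_finset_sum _ fun j _ => hlin_i j)
  have hrw : (∫ ω, softmax (ξ ω) l ∂μ) - softmax a l
      = ∫ ω, (softmax (ξ ω) l - softmax a l
          - ∑ j, SelMixAux.gradCoef a l j * (ξ ω j - a j)) ∂μ := by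
    have hi1 : Integrable (fun ω => softmax (ξ ω) l - softmax a l) μ :=
      hσ_i.sub (integrable_const _)
    rw [integral_sub hi1 (integrable_finset_sum _ fun j _ => hlin_i j),
      integral_sub hσ_i (integrable_const _), hconst, hlin0, sub_zero]
  simp only [ham]
  rw [hrw]
  calc |∫ ω, (softmax (ξ ω) l - softmax a l
          - ∑ j, SelMixAux.gradCoef a l j * (ξ ω j - a j)) ∂μ|
      ≤ ∫ ω, |softmax (ξ ω) l - softmax a l
          - ∑ j, SelMixAux.gradCoef a l j * (ξ ω j - a j)| ∂μ :=
        by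
          simpa [Real.norm_eq_abs] using norm_integral_le_integral_norm
            (fun ω => softmax (ξ ω) l - softmax a l
              - ∑ j, SelMixAux.gradCoef a l j * (ξ ω j - a j)) (μ := μ)
    _ ≤ ∫ ω, 8 * ∑ m, (ξ ω m - a m) ^ 2 ∂μ := by
        refine integral_mono hdiff_i.abs
          ((integrable_finset_sum _ fun m _ => hvar_i m).const_mul 8) fun ω => ?_
        exact SelMixAux.key hKpos l a (ξ ω)
    _ = 8 * ∑ m, ∫ ω, (ξ ω m - a m) ^ 2 ∂μ := by
        rw [integral_const_mul, integral_finset_sum _ fun m _ => hvar_i m]
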